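/- Fix H ∈ H_Z and consider the map C_H : α ↦ π_Z(α)H, defined for α ∈ L^∞(𝕋) by (π_Z(α)H)(z,x) = α(z)H(z,x). Then C_H extends to a bounded operator from L²(𝕋) to H_Z if and only if p₂(H) ∈ L^∞(𝕋), and in that case its operator norm equals ‖p₂(H)‖_∞^{1/2}. Moreover, C_H is bounded below (has a bounded inverse onto its range) if and only if there exists ε > 0 with p₂(H)(z) ≥ ε for a.e. z ∈ 𝕋. -/

import Mathlib

open MeasureTheory Complex Real Filter Topology

noncomputable section

/-- The normalized Haar measure `μ` of the circle `𝕋`, realized on the fundamental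
domain `(0, 2π]` of `ℝ` via the identification `z = e^{-iω}`. -/
def muT : Measure ℝ := (ENNReal.ofReal (2 * π))⁻¹ • (volume.restrict (Set.Ioc 0 (2 * π)))

/-- The measure on `𝕋 × [0,1]` underlying the Hilbert space `H_Z` (Zak-transform side). -/
def muZ : Measure (ℝ × ℝ) := muT.prod (volume.restrict (Set.Ioc 0 1))

/-- `L²(𝕋)`. -/
abbrev L2T : Type := MeasureTheory.Lp ℂ 2 muT

/-- The Hilbert space `H_Z ≃ L²(𝕋 × [0,1])`, the range of the Zak transform. -/
abbrev HZ : Type := MeasureTheory.Lp ℂ 2 muZ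

/-- `C` is (the bounded `L²(𝕋) → H_Z` extension of) the map `C_H : α ↦ π_Z(α)H`,
`(π_Z(α)H)(z,x) = α(z)H(z,x)`, characterized on `α ∈ L^∞(𝕋)`. -/
def IsCH (H : HZ) (C : L2T →L[ℂ] HZ) : Prop :=
  ∀ (α : ℝ → ℂ) (hα : MeasureTheory.MemLp α 2 muT), Measurable α →
    (∃ c, ∀ ω, ‖α ω‖ ≤ c) →
      ⇑(C (hα.toLp α)) =ᵐ[muZ] fun p : ℝ × ℝ => α p.1 * (⇑H) p

/-- `p₂(H)(ω) = ∫₀¹ |H(ω,x)|² dx`. -/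
def p2 (H : HZ) (ω : ℝ) : ℝ := ∫ x in Set.Ioc (0 : ℝ) 1, ‖(⇑H) (ω, x)‖ ^ 2

open ENNReal

instance : IsProbabilityMeasure muT := by
  constructor
  rw [muT]
  simp [Measure.restrict_apply, Real.volume_Ioc]
  rw [ENNReal.inv_mul_cancel (by positivity) (by simp [ENNReal.mul_eq_top])]

instance : IsProbabilityMeasure (volume.restrict (Set.Ioc (0:ℝ) 1)) := by
  constructor; simp

instance : SigmaFinite muT := inferInstance

lemma map_fst_muZ : muZ.map Prod.fst = muT := by
  rw [muZ, Measure.map_fst_prod]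
  simp

def q (H : HZ) (ω : ℝ) : ℝ≥0∞ := ∫⁻ x in Set.Ioc (0:ℝ) 1, ‖(⇑H) (ω,x)‖₊ ^ 2

lemma measurable_q (H : HZ) : Measurable (q H) := by
  apply Measurable.lintegral_prod_right
  exact ((Lp.stronglyMeasurable H).measurable.nnnorm.pow_const 2).coe_nnreal_ennreal

lemma p2_eq (H : HZ) (ω : ℝ) : p2 H ω = (q H ω).toReal := by
  have hm : Measurable (fun x : ℝ => ‖(⇑H) (ω,x)‖ ^ 2) :=
    ((Lp.stronglyMeasurable H).measurable.comp measurable_prodMk_left).norm.pow_const 2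
  rw [p2, q, MeasureTheory.integral_eq_lintegral_of_nonneg_ae
    (Filter.Eventually.of_forall fun x => by positivity) hm.aestronglyMeasurable]
  congr 1
  refine lintegral_congr fun x => ?_
  rw [ENNReal.ofReal_pow (norm_nonneg _), ofReal_norm, enorm_eq_nnnorm]

lemma eLpNorm_sq {γ : Type*} [MeasurableSpace γ] (μ : Measure γ) (f : γ → ℂ) :
    (eLpNorm f 2 μ) ^ 2 = ∫⁻ a, (‖f a‖₊ : ℝ≥0∞) ^ 2 ∂μ := by
  rw [eLpNorm_eq_lintegral_rpow_enorm_toReal (by norm_num) (by norm_num)]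
  rw [← ENNReal.rpow_natCast _ 2, ← ENNReal.rpow_mul]
  norm_num
  rfl

lemma key (H : HZ) (α : ℝ → ℂ) (hα : AEMeasurable α muT) :
    ∫⁻ p, (‖α p.1 * (⇑H) p‖₊ : ℝ≥0∞) ^ 2 ∂muZ = ∫⁻ ω, (‖α ω‖₊ : ℝ≥0∞) ^ 2 * q H ω ∂muT := by
  have hfst : AEMeasurable (fun p : ℝ × ℝ => α p.1) muZ := by
    have := hα.comp_quasiMeasurePreserving (μ := muZ)
      (f := Prod.fst) ⟨measurable_fst, by rw [map_fst_muZ]⟩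
    exact this
  have hH : Measurable (⇑H) := (Lp.stronglyMeasurable H).measurable
  have hmeas : AEMeasurable (fun p : ℝ × ℝ => (‖α p.1‖₊ : ℝ≥0∞) ^ 2 * (‖(⇑H) p‖₊ : ℝ≥0∞) ^ 2) muZ :=
    ((hfst.nnnorm.coe_nnreal_ennreal.pow_const 2)).mul
      ((hH.nnnorm.coe_nnreal_ennreal.pow_const 2).aemeasurable)
  calc ∫⁻ p, (‖α p.1 * (⇑H) p‖₊ : ℝ≥0∞) ^ 2 ∂muZ
      = ∫⁻ p, (‖α p.1‖₊ : ℝ≥0∞) ^ 2 * (‖(⇑H) p‖₊ : ℝ≥0∞) ^ 2 ∂muZ := by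
        refine lintegral_congr fun p => ?_
        rw [nnnorm_mul, ENNReal.coe_mul, mul_pow]
    _ = ∫⁻ ω, ∫⁻ x, (‖α ω‖₊ : ℝ≥0∞) ^ 2 * (‖(⇑H) (ω, x)‖₊ : ℝ≥0∞) ^ 2 ∂(volume.restrict (Set.Ioc 0 1)) ∂muT := by
        unfold muZ at hmeas ⊢
        exact MeasureTheory.lintegral_prod _ hmeas
    _ = ∫⁻ ω, (‖α ω‖₊ : ℝ≥0∞) ^ 2 * q H ω ∂muT := by
        refine lintegral_congr fun ω => ?_
        rw [q, lintegral_const_mul' _ _ (ENNReal.pow_ne_top ENNReal.coe_ne_top)]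

lemma lintegral_q (H : HZ) : ∫⁻ ω, q H ω ∂muT = (eLpNorm (⇑H) 2 muZ) ^ 2 := by
  rw [eLpNorm_sq]
  have := key H (fun _ => 1) aemeasurable_const
  simpa using this.symm

lemma lintegral_q_lt_top (H : HZ) : ∫⁻ ω, q H ω ∂muT < ⊤ := by
  rw [lintegral_q]
  exact ENNReal.pow_lt_top (Lp.eLpNorm_lt_top H)

lemma q_lt_top (H : HZ) : ∀ᵐ ω ∂muT, q H ω < ⊤ :=
  ae_lt_top (measurable_q H) (lintegral_q_lt_top H).ne

lemma enorm_Lp {γ : Type*} [MeasurableSpace γ] {μ : Measure γ} (f : Lp ℂ 2 μ) :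
    (‖f‖₊ : ℝ≥0∞) = eLpNorm (⇑f) 2 μ := by
  rw [Lp.nnnorm_def, ENNReal.coe_toNNReal (Lp.eLpNorm_ne_top f)]


lemma normC_sq (H : HZ) (C : L2T →L[ℂ] HZ) (hC : IsCH H C) (α : ℝ → ℂ)
    (hα : MemLp α 2 muT) (hm : Measurable α) (hb : ∃ c, ∀ ω, ‖α ω‖ ≤ c) :
    (‖C (hα.toLp α)‖₊ : ℝ≥0∞) ^ 2 = ∫⁻ ω, (‖α ω‖₊ : ℝ≥0∞) ^ 2 * q H ω ∂muT := by
  rw [enorm_Lp, eLpNorm_congr_ae (hC α hα hm hb), eLpNorm_sq, key H α hm.aemeasurable]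

lemma norm_toLp_sq {γ : Type*} [MeasurableSpace γ] {μ : Measure γ} (f : γ → ℂ)
    (hf : MemLp f 2 μ) :
    (‖hf.toLp f‖₊ : ℝ≥0∞) ^ 2 = ∫⁻ a, (‖f a‖₊ : ℝ≥0∞) ^ 2 ∂μ := by
  rw [enorm_Lp, eLpNorm_congr_ae (MemLp.coeFn_toLp hf), eLpNorm_sq]

lemma ae_lift (f g : ℝ → ℂ) (h : f =ᵐ[muT] g) :
    (fun p : ℝ × ℝ => f p.1) =ᵐ[muZ] (fun p : ℝ × ℝ => g p.1) := by
  have := MeasureTheory.ae_eq_comp (μ := muZ) (f := Prod.fst) (g := f) (g' := g)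
    measurable_fst.aemeasurable (by rwa [map_fst_muZ])
  exact this

lemma enorm_sq_ofReal {X : Type*} [NormedAddCommGroup X] (y : X) :
    (‖y‖₊ : ℝ≥0∞) ^ 2 = ENNReal.ofReal (‖y‖ ^ 2) := by
  rw [ENNReal.ofReal_pow (norm_nonneg _), ofReal_norm, enorm_eq_nnnorm]

lemma real_sqrt_le {a b c : ℝ} (hc : 0 ≤ c) (hb : 0 ≤ b) (h : c * a ^ 2 ≤ b ^ 2)
    (ha : 0 ≤ a) : Real.sqrt c * a ≤ b := by
  have := Real.sqrt_le_sqrt h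
  rwa [Real.sqrt_mul hc, Real.sqrt_sq ha, Real.sqrt_sq hb] at this

lemma norm_le_sqrt_mul {X Y : Type*} [NormedAddCommGroup X] [NormedAddCommGroup Y]
    {x : X} {y : Y} {c : ℝ} (hc : 0 ≤ c)
    (h : (‖y‖₊ : ℝ≥0∞) ^ 2 ≤ ENNReal.ofReal c * (‖x‖₊ : ℝ≥0∞) ^ 2) :
    ‖y‖ ≤ Real.sqrt c * ‖x‖ := by
  rw [enorm_sq_ofReal, enorm_sq_ofReal, ← ENNReal.ofReal_mul hc,
    ENNReal.ofReal_le_ofReal_iff (by positivity)] at h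
  calc ‖y‖ = Real.sqrt (‖y‖^2) := (Real.sqrt_sq (norm_nonneg y)).symm
    _ ≤ Real.sqrt (c * ‖x‖^2) := Real.sqrt_le_sqrt h
    _ = Real.sqrt c * ‖x‖ := by rw [Real.sqrt_mul hc, Real.sqrt_sq (norm_nonneg x)]

lemma sqrt_mul_le_norm {X Y : Type*} [NormedAddCommGroup X] [NormedAddCommGroup Y]
    {x : X} {y : Y} {c : ℝ} (hc : 0 ≤ c)
    (h : ENNReal.ofReal c * (‖x‖₊ : ℝ≥0∞) ^ 2 ≤ (‖y‖₊ : ℝ≥0∞) ^ 2) :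
    Real.sqrt c * ‖x‖ ≤ ‖y‖ := by
  rw [enorm_sq_ofReal, enorm_sq_ofReal, ← ENNReal.ofReal_mul hc,
    ENNReal.ofReal_le_ofReal_iff (by positivity)] at h
  exact real_sqrt_le hc (norm_nonneg y) h (norm_nonneg x)

-- indicator test function
def indC (E : Set ℝ) : ℝ → ℂ := E.indicator (fun _ => (1:ℂ))

lemma indC_meas {E : Set ℝ} (hE : MeasurableSet E) : Measurable (indC E) :=
  measurable_const.indicator hE

lemma indC_bdd (E : Set ℝ) : ∃ c, ∀ ω, ‖indC E ω‖ ≤ c := by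
  refine ⟨1, fun ω => ?_⟩
  by_cases h : ω ∈ E <;> simp [indC, h]

lemma indC_mem {E : Set ℝ} (hE : MeasurableSet E) : MemLp (indC E) 2 muT := by
  obtain ⟨c, hc⟩ := indC_bdd E
  exact MemLp.of_bound (indC_meas hE).aestronglyMeasurable c (Filter.Eventually.of_forall hc)

lemma lint_indC {E : Set ℝ} (hE : MeasurableSet E) (g : ℝ → ℝ≥0∞) :
    ∫⁻ ω, (‖indC E ω‖₊ : ℝ≥0∞) ^ 2 * g ω ∂muT = ∫⁻ ω in E, g ω ∂muT := by
  rw [← lintegral_indicator hE]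
  refine lintegral_congr fun ω => ?_
  by_cases h : ω ∈ E <;> simp [indC, h]

lemma norm_indC_sq {E : Set ℝ} (hE : MeasurableSet E) :
    (‖(indC_mem hE).toLp (indC E)‖₊ : ℝ≥0∞) ^ 2 = muT E := by
  rw [norm_toLp_sq]
  have := lint_indC hE (fun _ => 1)
  simpa using this

lemma dense_pred (P : L2T → Prop) (hP : IsClosed {x | P x})
    (h : ∀ (α : ℝ → ℂ) (hα : MemLp α 2 muT), Measurable α →
      (∃ c, ∀ ω, ‖α ω‖ ≤ c) → P (hα.toLp α)) :
    ∀ x : L2T, P x := by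
  intro x
  refine (Lp.simpleFunc.denseRange (by norm_num : (2:ℝ≥0∞) ≠ ⊤)).induction_on x hP ?_
  intro f
  have hmem := Lp.simpleFunc.memLp f
  have h1 := h (Lp.simpleFunc.toSimpleFunc f) hmem
    (Lp.simpleFunc.toSimpleFunc f).measurable
    (Lp.simpleFunc.toSimpleFunc f).exists_forall_norm_le
  have h2 : hmem.toLp (Lp.simpleFunc.toSimpleFunc f) = (f : L2T) := by
    rw [MemLp.toLp_congr hmem (Lp.memLp (f : L2T)) (Lp.simpleFunc.toSimpleFunc_eq_toFun f)]
    exact Lp.toLp_coeFn _ _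
  rw [h2] at h1
  exact h1

lemma sq_lt_top {x : ℝ≥0∞} (h : x ^ 2 ≠ ⊤) : x < ⊤ := by
  by_contra hx
  rw [not_lt, top_le_iff] at hx
  subst hx
  simp at h

lemma q_ae_ofReal (H : HZ) {c : ℝ} (hc : ∀ᵐ ω ∂muT, p2 H ω ≤ c) :
    ∀ᵐ ω ∂muT, q H ω ≤ ENNReal.ofReal c := by
  filter_upwards [hc, q_lt_top H] with ω h1 h2
  rw [p2_eq] at h1
  calc q H ω = ENNReal.ofReal ((q H ω).toReal) := (ENNReal.ofReal_toReal h2.ne).symm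
    _ ≤ _ := ENNReal.ofReal_le_ofReal h1

lemma qmp_fst : Measure.QuasiMeasurePreserving (Prod.fst : ℝ × ℝ → ℝ) muZ muT :=
  ⟨measurable_fst, map_fst_muZ ▸ Measure.AbsolutelyContinuous.rfl⟩

lemma lint_mul_le (H : HZ) {c : ℝ} (hq : ∀ᵐ ω ∂muT, q H ω ≤ ENNReal.ofReal c)
    (α : ℝ → ℂ) :
    ∫⁻ ω, (‖α ω‖₊ : ℝ≥0∞) ^ 2 * q H ω ∂muT
      ≤ ENNReal.ofReal c * ∫⁻ ω, (‖α ω‖₊ : ℝ≥0∞) ^ 2 ∂muT := by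
  rw [← lintegral_const_mul' _ _ ENNReal.ofReal_ne_top]
  apply lintegral_mono_ae
  filter_upwards [hq] with ω h
  calc (‖α ω‖₊ : ℝ≥0∞) ^ 2 * q H ω ≤ (‖α ω‖₊ : ℝ≥0∞) ^ 2 * ENNReal.ofReal c :=
        mul_le_mul_right h _
    _ = ENNReal.ofReal c * (‖α ω‖₊ : ℝ≥0∞) ^ 2 := mul_comm _ _

lemma memP (H : HZ) {c : ℝ} (hq : ∀ᵐ ω ∂muT, q H ω ≤ ENNReal.ofReal c)
    (α : ℝ → ℂ) (hα : MemLp α 2 muT) :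
    MemLp (fun p : ℝ × ℝ => α p.1 * (⇑H) p) 2 muZ := by
  constructor
  · exact (hα.aestronglyMeasurable.comp_quasiMeasurePreserving qmp_fst).mul
      (Lp.aestronglyMeasurable H)
  · apply sq_lt_top
    intro htop
    have h1 : (eLpNorm (fun p : ℝ × ℝ => α p.1 * (⇑H) p) 2 muZ) ^ 2
        ≤ ENNReal.ofReal c * (eLpNorm α 2 muT) ^ 2 := by
      rw [eLpNorm_sq, key H α hα.aestronglyMeasurable.aemeasurable, eLpNorm_sq]
      exact lint_mul_le H hq α
    rw [htop] at h1
    have h2 : ENNReal.ofReal c * (eLpNorm α 2 muT) ^ 2 < ⊤ :=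
      ENNReal.mul_lt_top ENNReal.ofReal_lt_top (ENNReal.pow_lt_top hα.2)
    exact absurd (top_le_iff.mp h1) h2.ne

def Tlin (H : HZ) {c : ℝ} (hq : ∀ᵐ ω ∂muT, q H ω ≤ ENNReal.ofReal c) : L2T →ₗ[ℂ] HZ where
  toFun x := (memP H hq (⇑x) (Lp.memLp x)).toLp _
  map_add' x y := by
    rw [← MemLp.toLp_add]
    apply MemLp.toLp_congr
    have := ae_lift _ _ (Lp.coeFn_add x y)
    filter_upwards [this] with p hp
    simp only [hp, Pi.add_apply]
    ring
  map_smul' a x := by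
    simp only [RingHom.id_apply]
    rw [← MemLp.toLp_const_smul]
    apply MemLp.toLp_congr
    have := ae_lift _ _ (Lp.coeFn_smul a x)
    filter_upwards [this] with p hp
    simp only [hp, Pi.smul_apply, smul_eq_mul]
    ring

lemma Tlin_norm (H : HZ) {c : ℝ} (hc0 : 0 ≤ c)
    (hq : ∀ᵐ ω ∂muT, q H ω ≤ ENNReal.ofReal c) (x : L2T) :
    ‖Tlin H hq x‖ ≤ Real.sqrt c * ‖x‖ := by
  apply norm_le_sqrt_mul hc0
  have h1 : (‖Tlin H hq x‖₊ : ℝ≥0∞) ^ 2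
      = ∫⁻ ω, (‖(⇑x) ω‖₊ : ℝ≥0∞) ^ 2 * q H ω ∂muT := by
    rw [show Tlin H hq x = (memP H hq (⇑x) (Lp.memLp x)).toLp _ from rfl,
      norm_toLp_sq, key H _ (Lp.aestronglyMeasurable x).aemeasurable]
  rw [h1]
  calc ∫⁻ ω, (‖(⇑x) ω‖₊ : ℝ≥0∞) ^ 2 * q H ω ∂muT
      ≤ ENNReal.ofReal c * ∫⁻ ω, (‖(⇑x) ω‖₊ : ℝ≥0∞) ^ 2 ∂muT := lint_mul_le H hq _
    _ = ENNReal.ofReal c * (‖x‖₊ : ℝ≥0∞) ^ 2 := by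
        rw [enorm_Lp, eLpNorm_sq]

def CH (H : HZ) {c : ℝ} (hc0 : 0 ≤ c)
    (hq : ∀ᵐ ω ∂muT, q H ω ≤ ENNReal.ofReal c) : L2T →L[ℂ] HZ :=
  LinearMap.mkContinuous (Tlin H hq) (Real.sqrt c) (Tlin_norm H hc0 hq)

lemma CH_isCH (H : HZ) {c : ℝ} (hc0 : 0 ≤ c)
    (hq : ∀ᵐ ω ∂muT, q H ω ≤ ENNReal.ofReal c) : IsCH H (CH H hc0 hq) := by
  intro α hα hm hb
  have h1 : CH H hc0 hq (hα.toLp α) = (memP H hq _ (Lp.memLp (hα.toLp α))).toLp _ := rfl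
  rw [h1]
  have h2 := MemLp.coeFn_toLp (memP H hq (⇑(hα.toLp α)) (Lp.memLp (hα.toLp α)))
  have h3 := ae_lift _ _ (MemLp.coeFn_toLp hα)
  filter_upwards [h2, h3] with p hp1 hp2
  rw [hp1, hp2]

lemma normC_sq_ind (H : HZ) (C : L2T →L[ℂ] HZ) (hC : IsCH H C) {s : Set ℝ}
    (hs : MeasurableSet s) :
    (‖C ((indC_mem hs).toLp (indC s))‖₊ : ℝ≥0∞) ^ 2 = ∫⁻ ω in s, q H ω ∂muT := by
  rw [normC_sq H C hC (indC s) (indC_mem hs) (indC_meas hs) (indC_bdd s), lint_indC hs]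

lemma q_le_opNorm (H : HZ) (C : L2T →L[ℂ] HZ) (hC : IsCH H C) :
    ∀ᵐ ω ∂muT, q H ω ≤ (‖C‖₊ : ℝ≥0∞) ^ 2 := by
  apply ae_le_of_forall_setLIntegral_le_of_sigmaFinite (measurable_q H)
  intro s hs _
  rw [setLIntegral_const]
  have hb : (‖C ((indC_mem hs).toLp (indC s))‖₊ : ℝ≥0∞)
      ≤ (‖C‖₊ : ℝ≥0∞) * (‖(indC_mem hs).toLp (indC s)‖₊ : ℝ≥0∞) := by
    exact_mod_cast C.le_opNNNorm _
  calc ∫⁻ ω in s, q H ω ∂muT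
      = (‖C ((indC_mem hs).toLp (indC s))‖₊ : ℝ≥0∞) ^ 2 := (normC_sq_ind H C hC hs).symm
    _ ≤ ((‖C‖₊ : ℝ≥0∞) * (‖(indC_mem hs).toLp (indC s)‖₊ : ℝ≥0∞)) ^ 2 := by gcongr
    _ = (‖C‖₊ : ℝ≥0∞) ^ 2 * muT s := by rw [mul_pow, norm_indC_sq hs]

lemma p2_le_opNormSq (H : HZ) (C : L2T →L[ℂ] HZ) (hC : IsCH H C) :
    ∀ᵐ ω ∂muT, p2 H ω ≤ ‖C‖ ^ 2 := by
  filter_upwards [q_le_opNorm H C hC] with ω h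
  rw [p2_eq]
  have := ENNReal.toReal_mono (by simp) h
  simpa using this

lemma q_ge_of_lower (H : HZ) (C : L2T →L[ℂ] HZ) (hC : IsCH H C) {ε : ℝ} (hε : 0 < ε)
    (hlow : ∀ x : L2T, ε * ‖x‖ ≤ ‖C x‖) :
    ∀ᵐ ω ∂muT, ENNReal.ofReal (ε ^ 2) ≤ q H ω := by
  apply ae_le_of_forall_setLIntegral_le_of_sigmaFinite measurable_const
  intro s hs _
  rw [setLIntegral_const]
  set x := (indC_mem hs).toLp (indC s) with hx
  have h1 := hlow x
  have h2 : ENNReal.ofReal ε * (‖x‖₊ : ℝ≥0∞) ≤ (‖C x‖₊ : ℝ≥0∞) := by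
    rw [← enorm_eq_nnnorm, ← enorm_eq_nnnorm, ← ofReal_norm, ← ofReal_norm, ← ENNReal.ofReal_mul hε.le]
    exact ENNReal.ofReal_le_ofReal h1
  calc ENNReal.ofReal (ε ^ 2) * muT s
      = ENNReal.ofReal (ε ^ 2) * (‖x‖₊ : ℝ≥0∞) ^ 2 := by rw [norm_indC_sq hs]
    _ = (ENNReal.ofReal ε * (‖x‖₊ : ℝ≥0∞)) ^ 2 := by
        rw [mul_pow, ENNReal.ofReal_pow hε.le]
    _ ≤ (‖C x‖₊ : ℝ≥0∞) ^ 2 := by gcongr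
    _ = ∫⁻ ω in s, q H ω ∂muT := normC_sq_ind H C hC hs

lemma lower_of_q_ge (H : HZ) (C : L2T →L[ℂ] HZ) (hC : IsCH H C) {ε : ℝ} (hε : 0 ≤ ε)
    (hq : ∀ᵐ ω ∂muT, ENNReal.ofReal ε ≤ q H ω) :
    ∀ x : L2T, Real.sqrt ε * ‖x‖ ≤ ‖C x‖ := by
  apply dense_pred (fun x => Real.sqrt ε * ‖x‖ ≤ ‖C x‖)
  · exact isClosed_le (continuous_const.mul continuous_norm) (C.continuous.norm)
  · intro α hα hm hb
    apply sqrt_mul_le_norm hε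
    rw [normC_sq H C hC α hα hm hb, norm_toLp_sq]
    rw [← lintegral_const_mul' _ _ ENNReal.ofReal_ne_top]
    apply lintegral_mono_ae
    filter_upwards [hq] with ω h
    rw [mul_comm]
    exact mul_le_mul_right h _

lemma opNorm_le_sqrt (H : HZ) (C : L2T →L[ℂ] HZ) (hC : IsCH H C) {c : ℝ} (hc0 : 0 ≤ c)
    (hq : ∀ᵐ ω ∂muT, q H ω ≤ ENNReal.ofReal c) : ‖C‖ ≤ Real.sqrt c := by
  apply C.opNorm_le_bound (Real.sqrt_nonneg c)
  apply dense_pred (fun x => ‖C x‖ ≤ Real.sqrt c * ‖x‖)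
  · exact isClosed_le (C.continuous.norm) (continuous_const.mul continuous_norm)
  · intro α hα hm hb
    apply norm_le_sqrt_mul hc0
    rw [normC_sq H C hC α hα hm hb, norm_toLp_sq]
    exact lint_mul_le H hq α

lemma p2_nonneg (H : HZ) (ω : ℝ) : 0 ≤ p2 H ω :=
  integral_nonneg fun x => by positivity


/-- Proposition 4.6: `C_H` extends to a bounded operator
`L²(𝕋) → H_Z` iff `p₂(H) ∈ L^∞(𝕋)`; in that case `‖C_H‖ = ‖p₂(H)‖_∞^{1/2}`; and `C_H` is
bounded below iff `p₂(H) ≥ ε > 0` a.e. on `𝕋`. -/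
theorem CH_bounded_iff_p2_bounded (H : HZ) :
    ((∃ C : L2T →L[ℂ] HZ, IsCH H C) ↔ ∃ c : ℝ, ∀ᵐ ω ∂muT, p2 H ω ≤ c) ∧
    (∀ C : L2T →L[ℂ] HZ, IsCH H C →
      ‖C‖ = Real.sqrt (sInf {c : ℝ | ∀ᵐ ω ∂muT, p2 H ω ≤ c})) ∧
    ∀ C : L2T →L[ℂ] HZ, IsCH H C →
      ((∃ ε > (0 : ℝ), ∀ α : L2T, ε * ‖α‖ ≤ ‖C α‖) ↔
        ∃ ε > (0 : ℝ), ∀ᵐ ω ∂muT, ε ≤ p2 H ω) := by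
  set S := {c : ℝ | ∀ᵐ ω ∂muT, p2 H ω ≤ c} with hS
  have hS0 : ∀ c ∈ S, 0 ≤ c := by
    intro c hc
    haveI : (ae muT).NeBot := ae_neBot.mpr (NeZero.ne _)
    obtain ⟨ω, hω⟩ := (show ∀ᵐ ω ∂muT, p2 H ω ≤ c from hc).exists
    exact (p2_nonneg H ω).trans hω
  refine ⟨?_, ?_, ?_⟩
  · constructor
    · rintro ⟨C, hC⟩
      exact ⟨‖C‖ ^ 2, p2_le_opNormSq H C hC⟩
    · rintro ⟨c, hc⟩
      have hc' : ∀ᵐ ω ∂muT, p2 H ω ≤ max c 0 := by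
        filter_upwards [hc] with ω h; exact h.trans (le_max_left _ _)
      exact ⟨CH H (le_max_right c 0) (q_ae_ofReal H hc'),
        CH_isCH H (le_max_right c 0) (q_ae_ofReal H hc')⟩
  · intro C hC
    have hne : S.Nonempty := ⟨‖C‖ ^ 2, p2_le_opNormSq H C hC⟩
    have hbdd : BddBelow S := ⟨0, hS0⟩
    have hMem : ∀ᵐ ω ∂muT, p2 H ω ≤ sInf S := by
      have h : ∀ n : ℕ, ∀ᵐ ω ∂muT, p2 H ω ≤ sInf S + 1 / (n + 1) := by
        intro n
        obtain ⟨c, hcS, hclt⟩ := Real.lt_sInf_add_pos hne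
          (by positivity : (0:ℝ) < 1 / (n + 1))
        filter_upwards [hcS] with ω hω
        exact hω.trans hclt.le
      filter_upwards [ae_all_iff.mpr h] with ω hω
      apply _root_.le_of_forall_pos_le_add
      intro ε hε
      obtain ⟨n, hn⟩ := exists_nat_one_div_lt hε
      exact (hω n).trans (by linarith)
    have hc0 : 0 ≤ sInf S := le_csInf hne hS0
    refine le_antisymm (opNorm_le_sqrt H C hC hc0 (q_ae_ofReal H hMem)) ?_
    have h1 : sInf S ≤ ‖C‖ ^ 2 := csInf_le hbdd (p2_le_opNormSq H C hC)
    calc Real.sqrt (sInf S) ≤ Real.sqrt (‖C‖ ^ 2) := Real.sqrt_le_sqrt h1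
      _ = ‖C‖ := Real.sqrt_sq (norm_nonneg C)
  · intro C hC
    constructor
    · rintro ⟨ε, hε, hlow⟩
      refine ⟨ε ^ 2, by positivity, ?_⟩
      filter_upwards [q_ge_of_lower H C hC hε hlow, q_lt_top H] with ω h1 h2
      rw [p2_eq]
      have := ENNReal.toReal_mono h2.ne h1
      rwa [ENNReal.toReal_ofReal (by positivity)] at this
    · rintro ⟨ε, hε, hp⟩
      refine ⟨Real.sqrt ε, Real.sqrt_pos.mpr hε, ?_⟩
      apply lower_of_q_ge H C hC hε.le
      filter_upwards [hp, q_lt_top H] with ω h1 h2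
      rw [p2_eq] at h1
      calc ENNReal.ofReal ε ≤ ENNReal.ofReal ((q H ω).toReal) := ENNReal.ofReal_le_ofReal h1
        _ = q H ω := ENNReal.ofReal_toReal h2.ne


end
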